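/- arXiv:1901.03168 — 2 statements merged into one kernel-verified Lean document; each statement's English description precedes it below -/
import Mathlib

section
/- Let A be an associative unital ring, T a classical n-tilting left A-module, 1 ≤ e ≤ n, and M ∈ KE_e(T). If X is a left A-module with Ext_A^i(T,X) = 0 for every i ≥ e (where Ext_A^0 = Hom_A), then Hom_A(X,M) = 0. Moreover, the same conclusion Hom_A(X',M)=0 holds for every quotient X' of such a module X, and for every module obtained as an extension of such quotients. -/
set_option maxHeartbeats 1000000
set_option synthInstance.maxHeartbeats 400000
open CategoryTheory Limits
universe u
variable (A : Type u) [Ring A]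
noncomputable instance : HasDerivedCategory (ModuleCat.{u} A) := HasDerivedCategory.standard _
instance : HasExt.{u+1} (ModuleCat.{u} A) := hasExt_of_hasDerivedCategory _

/-- `X` is a direct summand of a coproduct of copies of `T`. -/
def IsSummandOfCopies (T X : Type u) [AddCommGroup T] [Module A T]
    [AddCommGroup X] [Module A X] : Prop :=
  ∃ (ι : Type u) (s : X →ₗ[A] (ι →₀ T)) (r : (ι →₀ T) →ₗ[A] X),
    r.comp s = LinearMap.id

/-- `T` is a classical `n`-tilting left `A`-module. -/
structure IsClassicalTilting (T : Type u) [AddCommGroup T] [Module A T] (n : ℕ) : Prop where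
  /-- `p_n`: a projective resolution of length `n` by finitely generated projectives -/
  proj_res : ∃ pr : ProjectiveResolution (ModuleCat.of A T),
      (∀ i, Module.Finite A (pr.complex.X i)) ∧ ∀ i, n < i → IsZero (pr.complex.X i)
  /-- `e_n`: rigidity -/
  rigid : ∀ i, 0 < i → i ≤ n →
      Subsingleton (Abelian.Ext (ModuleCat.of A T) (ModuleCat.of A T) i)
  /-- `g_n`: a coresolution `0 → A → T_0 → ⋯ → T_n → 0` by finitely generated
  direct summands of coproducts of copies of `T` -/
  cores : ∃ S : ComposableArrows (ModuleCat.{u} A) (n+3),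
      S.Exact ∧ IsZero (S.obj' 0) ∧ IsZero (S.obj' (n+3)) ∧
      S.obj' 1 = ModuleCat.of A A ∧
      ∀ i, (h : i ≤ n) → Module.Finite A (S.obj' (i+2) (by omega)) ∧
        IsSummandOfCopies A T (S.obj' (i+2) (by omega))

variable (T : Type u) [AddCommGroup T] [Module A T]

/-- `X ∈ KE_e(T)`: `Ext_A^i(T,X) = 0` for every `i ≠ e`, with the convention
`Ext_A^0 = Hom_A`. -/
def memKE (e : ℕ) (X : ModuleCat.{u} A) : Prop :=
  ∀ i : ℕ, i ≠ e → Subsingleton (Abelian.Ext (ModuleCat.of A T) X i)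

/-- `Ext_A^i(T,X) = 0` for every `i ≥ e` (with the convention
`Ext_A^0 = Hom_A`). -/
def ExtVanishFrom (e : ℕ) (X : ModuleCat.{u} A) : Prop :=
  ∀ i : ℕ, e ≤ i → Subsingleton (Abelian.Ext (ModuleCat.of A T) X i)

/-- `X'` is an epimorphic image of a module `X` with `Ext_A^i(T,X) = 0` for
all `i ≥ e`. -/
def QuotOfExtVanishFrom (e : ℕ) (X' : ModuleCat.{u} A) : Prop :=
  ∃ (X : ModuleCat.{u} A) (π : X ⟶ X'), Epi π ∧ ExtVanishFrom A T e X


namespace Stmt10Aux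

variable {A}

noncomputable def sglHomologyIso :
    DerivedCategory.singleFunctor (ModuleCat.{u} A) 0 ⋙
      DerivedCategory.homologyFunctor (ModuleCat.{u} A) 0 ≅ 𝟭 _ :=
  Functor.isoWhiskerRight ((SingleFunctors.evaluation _ _ 0).mapIso
      (DerivedCategory.singleFunctorsPostcompQIso _)) _ ≪≫ Functor.associator _ _ _ ≪≫
    Functor.isoWhiskerLeft _ (DerivedCategory.homologyFunctorFactors _ 0) ≪≫
    (by exact HomologicalComplex.homologyFunctorSingleIso _ _ 0)

instance sglFaithful : (DerivedCategory.singleFunctor (ModuleCat.{u} A) 0).Faithful :=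
  Functor.Faithful.of_comp_iso (sglHomologyIso)

open Abelian

lemma mk₀_inj {X Y : ModuleCat.{u} A} {f g : X ⟶ Y} (h : Ext.mk₀ f = Ext.mk₀ g) : f = g := by
  have h2 : (Ext.mk₀ f).hom = (Ext.mk₀ g).hom := by rw [h]
  rw [Ext.mk₀_hom, Ext.mk₀_hom] at h2
  simp only [ShiftedHom.mk₀] at h2
  rw [cancel_mono] at h2
  exact (DerivedCategory.singleFunctor _ 0).map_injective h2

lemma subsingleton_ext_of_isZero {X Y : ModuleCat.{u} A} (hX : IsZero X) (j : ℕ) :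
    Subsingleton (Ext X Y j) := by
  constructor
  intro a b
  have hid : (𝟙 X : X ⟶ X) = 0 := hX.eq_of_src _ _
  have : ∀ c : Ext X Y j, c = 0 := by
    intro c
    calc c = (Ext.mk₀ (𝟙 X)).comp c (zero_add j) := (Ext.mk₀_id_comp c).symm
    _ = (0 : Ext X X 0).comp c (zero_add j) := by rw [hid, Ext.mk₀_zero]
    _ = 0 := Ext.zero_comp _ 0 c j (zero_add j)
  rw [this a, this b]

/-- kernel-triviality of the contravariant connecting map, given vanishing of the middle Ext. -/
lemma eq_zero_of_extClass_comp_eq_zero {S : ShortComplex (ModuleCat.{u} A)}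
    (hS : S.ShortExact) {Y : ModuleCat.{u} A} {j : ℕ}
    (hmid : Subsingleton (Ext S.X₂ Y j)) (α : Ext S.X₁ Y j)
    (h : hS.extClass.comp α (show 1 + j = j + 1 by omega) = 0) : α = 0 := by
  obtain ⟨x₂, hx₂⟩ := Ext.contravariant_sequence_exact₁ hS _ α (show 1 + j = j + 1 by omega) h
  rw [Subsingleton.elim x₂ 0] at hx₂
  rw [← hx₂, Ext.comp_zero]

lemma subsingleton_ext₁ {S : ShortComplex (ModuleCat.{u} A)}
    (hS : S.ShortExact) {Y : ModuleCat.{u} A} {j : ℕ}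
    (hmid : Subsingleton (Ext S.X₂ Y j)) (hright : Subsingleton (Ext S.X₃ Y (j+1))) :
    Subsingleton (Ext S.X₁ Y j) := by
  constructor
  intro a b
  have : ∀ c : Ext S.X₁ Y j, c = 0 := fun c =>
    eq_zero_of_extClass_comp_eq_zero hS hmid c (Subsingleton.elim _ _)
  rw [this a, this b]

lemma subsingleton_ext₂ {S : ShortComplex (ModuleCat.{u} A)}
    (hS : S.ShortExact) {Y : ModuleCat.{u} A} {j : ℕ}
    (hleft : Subsingleton (Ext S.X₁ Y j)) (hright : Subsingleton (Ext S.X₃ Y j)) :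
    Subsingleton (Ext S.X₂ Y j) := by
  constructor
  intro a b
  have : ∀ c : Ext S.X₂ Y j, c = 0 := by
    intro c
    obtain ⟨x₃, hx₃⟩ := Ext.contravariant_sequence_exact₂ hS _ c (Subsingleton.elim _ _)
    rw [Subsingleton.elim x₃ 0] at hx₃
    rw [← hx₃, Ext.comp_zero]
  rw [this a, this b]

lemma subsingleton_ext_of_retract {W V Y : ModuleCat.{u} A} (s : W ⟶ V) (r : V ⟶ W)
    (hsr : s ≫ r = 𝟙 W) (j : ℕ) (hV : Subsingleton (Ext V Y j)) :
    Subsingleton (Ext W Y j) := by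
  constructor
  intro a b
  have : ∀ c : Ext W Y j, c = 0 := by
    intro c
    calc c = (Ext.mk₀ (𝟙 W)).comp c (zero_add j) := (Ext.mk₀_id_comp c).symm
    _ = (Ext.mk₀ s).comp ((Ext.mk₀ r).comp c (zero_add j)) (zero_add j) := by
        rw [Ext.mk₀_comp_mk₀_assoc, hsr]
    _ = (Ext.mk₀ s).comp (0 : Ext V Y j) (zero_add j) := by
        rw [Subsingleton.elim ((Ext.mk₀ r).comp c (zero_add j)) 0]
    _ = 0 := Ext.comp_zero _ _ j j (zero_add j)
  rw [this a, this b]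

section CopiesLemmas

variable (T : Type u) [AddCommGroup T] [Module A T]

lemma subsingleton_ext_finpi {Y : ModuleCat.{u} A} {j : ℕ}
    (hT : Subsingleton (Ext (ModuleCat.of A T) Y j)) (m : ℕ) :
    Subsingleton (Ext (ModuleCat.of A (Fin m → T)) Y j) := by
  induction m with
  | zero =>
      exact subsingleton_ext_of_isZero (ModuleCat.isZero_of_subsingleton _) j
  | succ m ih =>
      let f : ModuleCat.of A T ⟶ ModuleCat.of A (Fin (m+1) → T) :=
        ModuleCat.ofHom (LinearMap.single A (fun _ : Fin (m+1) => T) 0)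
      let g : ModuleCat.of A (Fin (m+1) → T) ⟶ ModuleCat.of A (Fin m → T) :=
        ModuleCat.ofHom (LinearMap.funLeft A T Fin.succ)
      have w : f ≫ g = 0 := by
        ext t i
        exact Pi.single_eq_of_ne (M := fun _ : Fin (m+1) => T) (Fin.succ_ne_zero i) t
      have hSE : (ShortComplex.mk f g w).ShortExact := by
        refine ShortComplex.ShortExact.mk' ?_ ?_ ?_
        · rw [ShortComplex.moduleCat_exact_iff]
          intro x hx
          refine ⟨x 0, funext fun i => ?_⟩
          induction i using Fin.cases with
          | zero => simp [f]
          | succ i =>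
              have : x i.succ = 0 := congrFun hx i
              simp [f, this, Pi.single_eq_of_ne (Fin.succ_ne_zero i)]
        · rw [ModuleCat.mono_iff_injective]
          intro a b hab
          simpa [f] using congrFun hab 0
        · rw [ModuleCat.epi_iff_surjective]
          intro q
          exact ⟨Fin.cons 0 q, funext fun i => by simp [g, LinearMap.funLeft]⟩
      exact subsingleton_ext₂ hSE hT ih

lemma subsingleton_ext_summand {N : Type u} [AddCommGroup N] [Module A N]
    [Module.Finite A N] (hsum : IsSummandOfCopies A T N)
    {Y : ModuleCat.{u} A} {j : ℕ} (hT : Subsingleton (Ext (ModuleCat.of A T) Y j)) :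
    Subsingleton (Ext (ModuleCat.of A N) Y j) := by
  classical
  obtain ⟨ι, s, r, hrs⟩ := hsum
  obtain ⟨m, v, hv⟩ := Module.Finite.exists_fin (R := A) (M := N)
  set F : Finset ι := Finset.univ.biUnion (fun i : Fin m => (s (v i)).support) with hF
  have hsub : ∀ x : N, s x ∈ Finsupp.supported T A (↑F : Set ι) := by
    intro x
    have hle : Submodule.span A (Set.range v) ≤
        Submodule.comap s (Finsupp.supported T A (↑F : Set ι)) := by
      rw [Submodule.span_le]
      rintro _ ⟨i, rfl⟩
      refine Submodule.mem_comap.mpr ((Finsupp.mem_supported A _).mpr ?_)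
      intro a ha
      simp only [F, Finset.coe_biUnion, Finset.coe_univ, Set.mem_iUnion]
      exact ⟨i, trivial, ha⟩
    have : x ∈ Submodule.comap s (Finsupp.supported T A (↑F : Set ι)) := by
      apply hle
      rw [hv]; trivial
    exact this
  let s' : N →ₗ[A] Finsupp.supported T A (↑F : Set ι) :=
    LinearMap.codRestrict _ s hsub
  let e1 : (Finsupp.supported T A (↑F : Set ι)) ≃ₗ[A] ((↑F : Set ι) →₀ T) :=
    Finsupp.supportedEquivFinsupp _
  let e2 : ((↑F : Set ι) →₀ T) ≃ₗ[A] ((↑F : Set ι) → T) :=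
    Finsupp.linearEquivFunOnFinite A T _
  let e3 : ((↑F : Set ι) → T) ≃ₗ[A] (Fin F.card → T) :=
    LinearEquiv.funCongrLeft A T (F.equivFin.symm.trans (Equiv.setCongr rfl))
  let big := (e1.trans e2).trans e3
  let sN : N →ₗ[A] (Fin F.card → T) := big.toLinearMap ∘ₗ s'
  let rN : (Fin F.card → T) →ₗ[A] N :=
    r ∘ₗ (Finsupp.supported T A (↑F : Set ι)).subtype ∘ₗ big.symm.toLinearMap
  have hretr : ∀ x : N, rN (sN x) = x := by
    intro x
    have : rN (sN x) = r ((s' x : ι →₀ T)) := by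
      simp only [rN, sN, LinearMap.comp_apply, LinearEquiv.coe_coe,
        LinearEquiv.symm_apply_apply, Submodule.subtype_apply]
    rw [this]
    exact congrArg (fun φ => φ x) hrs
  exact subsingleton_ext_of_retract (ModuleCat.ofHom sN) (ModuleCat.ofHom rN)
    (by ext x; exact hretr x) j (subsingleton_ext_finpi T hT F.card)

lemma subsingleton_ext_summand' {W Y : ModuleCat.{u} A} (hfin : Module.Finite A W)
    (hsum : IsSummandOfCopies A T W) {j : ℕ}
    (hT : Subsingleton (Ext (ModuleCat.of A T) Y j)) :
    Subsingleton (Ext W Y j) := by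
  letI := hfin
  have := subsingleton_ext_summand T hsum (Y := Y) (j := j) hT
  rwa [ModuleCat.of_coe] at this

end CopiesLemmas

section Coresolution

variable {n : ℕ} (S : ComposableArrows (ModuleCat.{u} A) (n+3))

lemma exists_preimage (hSe : S.Exact) (i : ℕ) (h : i + 2 ≤ n + 3)
    (x2 : S.obj' (i+1) (by omega)) (hx : S.map' (i+1) (i+2) (by omega) (by omega) x2 = 0) :
    ∃ x1 : S.obj' i (by omega), S.map' i (i+1) (by omega) (by omega) x1 = x2 := by
  have h2 := hSe.exact' i (i+1) (i+2) (by omega) (by omega) (by omega)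
  rw [ShortComplex.moduleCat_exact_iff] at h2
  exact h2 x2 hx

noncomputable def dm (k : ℕ) (h2 : k + 3 ≤ n + 3) :
    S.obj' (k+2) (by omega) ⟶ S.obj' (k+3) h2 :=
  S.map' (k+2) (k+3) (by omega) h2

noncomputable def Kk (k : ℕ) (h2 : k + 3 ≤ n + 3) : ModuleCat.{u} A :=
  ModuleCat.of A (LinearMap.ker (dm S k h2).hom)

noncomputable def ιk (k : ℕ) (h2 : k + 3 ≤ n + 3) : Kk S k h2 ⟶ S.obj' (k+2) (by omega) :=
  ModuleCat.ofHom (LinearMap.ker (dm S k h2).hom).subtype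

noncomputable def pk (hc : S.IsComplex) (k : ℕ) (h2 : k + 4 ≤ n + 3) :
    S.obj' (k+2) (by omega) ⟶ Kk S (k+1) (by omega) :=
  ModuleCat.ofHom (LinearMap.codRestrict _ (dm S k (by omega)).hom (fun x => by
    have hz := hc.zero' (k+2) (k+3) (k+4) (by omega) (by omega) (by omega)
    exact congrArg (fun φ => φ.hom x) hz))

noncomputable def Ek (hc : S.IsComplex) (k : ℕ) (h2 : k + 4 ≤ n + 3) :
    ShortComplex (ModuleCat.{u} A) :=
  ShortComplex.mk (ιk S k (by omega)) (pk S hc k h2) (by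
    ext x
    exact Subtype.ext x.2)

lemma Ek_shortExact (hSe : S.Exact) (k : ℕ) (h2 : k + 4 ≤ n + 3) :
    (Ek S hSe.toIsComplex k h2).ShortExact := by
  refine ShortComplex.ShortExact.mk' ?_ ?_ ?_
  · rw [ShortComplex.moduleCat_exact_iff]
    intro x2 hx
    have hx2 : dm S k (by omega) x2 = 0 := congrArg Subtype.val hx
    exact ⟨⟨x2, hx2⟩, rfl⟩
  · rw [ModuleCat.mono_iff_injective]
    exact Subtype.val_injective
  · rw [ModuleCat.epi_iff_surjective]
    rintro ⟨y, hy⟩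
    obtain ⟨x, hx⟩ := exists_preimage S hSe (k+2) (by omega) y hy
    exact ⟨x, Subtype.ext hx⟩

noncomputable def Elast : ShortComplex (ModuleCat.{u} A) :=
  ShortComplex.mk (ιk S n (by omega)) (dm S n (by omega)) (by
    ext x
    exact x.2)

lemma Elast_shortExact (hSe : S.Exact) (hlast : IsZero (S.obj' (n+3) (by omega))) :
    (Elast S).ShortExact := by
  have hsub : ∀ y : (S.obj' (n+3) (by omega)), y = 0 := by
    intro y
    have hid : (𝟙 (S.obj' (n+3) (by omega))) = 0 := hlast.eq_of_src _ _
    have h := congrArg (fun φ : S.obj' (n+3) (by omega) ⟶ S.obj' (n+3) (by omega) => φ y) hid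
    simpa using h
  refine ShortComplex.ShortExact.mk' ?_ ?_ ?_
  · rw [ShortComplex.moduleCat_exact_iff]
    intro x2 hx
    exact ⟨⟨x2, hx⟩, rfl⟩
  · rw [ModuleCat.mono_iff_injective]
    exact Subtype.val_injective
  · rw [ModuleCat.epi_iff_surjective]
    intro y
    exact ⟨0, by rw [map_zero]; exact (hsub y).symm⟩

noncomputable def czero (hc : S.IsComplex) : S.obj' 1 (by omega) ⟶ Kk S 0 (by omega) :=
  ModuleCat.ofHom (LinearMap.codRestrict _ (S.map' 1 2 (by omega) (by omega)).hom (fun x => by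
    have hz := hc.zero' 1 2 3 (by omega) (by omega) (by omega)
    exact congrArg (fun φ => φ.hom x) hz))

lemma czero_isIso (hSe : S.Exact) (h0 : IsZero (S.obj' 0 (by omega))) :
    IsIso (czero S hSe.toIsComplex) := by
  have hsub : ∀ y : (S.obj' 0 (by omega)), y = 0 := by
    intro y
    have hid : (𝟙 (S.obj' 0 (by omega))) = 0 := h0.eq_of_src _ _
    have h := congrArg (fun φ : S.obj' 0 (by omega) ⟶ S.obj' 0 (by omega) => φ y) hid
    exact h
  rw [ConcreteCategory.isIso_iff_bijective]
  constructor
  · intro a b hab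
    have h1 : S.map' 1 2 (by omega) (by omega) a = S.map' 1 2 (by omega) (by omega) b :=
      congrArg Subtype.val hab
    have h2 : S.map' 1 2 (by omega) (by omega) (a - b) = 0 := by
      rw [map_sub, h1, sub_self]
    obtain ⟨x0, hx0⟩ := exists_preimage S hSe 0 (by omega) (a - b) h2
    rw [hsub x0, map_zero] at hx0
    exact sub_eq_zero.mp hx0.symm
  · rintro ⟨y, hy⟩
    obtain ⟨x, hx⟩ := exists_preimage S hSe 1 (by omega) y hy
    exact ⟨x, Subtype.ext hx⟩

/-- The iterated extension classes `ξ_k ∈ Ext^k(C_k, C_0)`. -/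
noncomputable def xi (hSe : S.Exact) :
    ∀ (k : ℕ) (hk : k + 3 ≤ n + 3), Ext (Kk S k hk) (Kk S 0 (by omega)) k
  | 0, _ => Ext.mk₀ (𝟙 _)
  | (k+1), hk => ((Ek_shortExact S hSe k (by omega)).extClass).comp
      (xi hSe k (by omega)) (by omega)

/-- Downward chain: `Ext^k(C_k, X)` is zero for `e ≤ k ≤ n`. -/
lemma chainX_aux (hSe : S.Exact) (hlast : IsZero (S.obj' (n+3) (by omega)))
    {X : ModuleCat.{u} A} (e : ℕ)
    (hTk : ∀ (k : ℕ) (hk : k ≤ n) (j : ℕ) (hj : e ≤ j),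
      Subsingleton (Ext (S.obj' (k+2) (by omega)) X j)) :
    ∀ (m k : ℕ) (hk : k = n - m) (he1 : 1 ≤ e) (hke : e ≤ k) (hkn : k ≤ n),
      Subsingleton (Ext (Kk S k (by omega)) X k) := by
  intro m
  induction m with
  | zero =>
      intro k hk he1 hke hkn
      have hk' : k = n := by omega
      subst hk'
      exact subsingleton_ext₁ (Elast_shortExact S hSe hlast)
        (hTk k le_rfl k hke)
        (subsingleton_ext_of_isZero hlast (k+1))
  | succ m ih =>
      intro k hk he1 hke hkn
      by_cases hkn2 : k = n
      · subst hkn2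
        exact subsingleton_ext₁ (Elast_shortExact S hSe hlast)
          (hTk k le_rfl k hke)
          (subsingleton_ext_of_isZero hlast (k+1))
      · have h4 : k + 4 ≤ n + 3 := by omega
        have hnext := ih (k+1) (by omega) he1 (by omega) (by omega)
        exact subsingleton_ext₁ (Ek_shortExact S hSe k h4) (hTk k (by omega) k hke) hnext

lemma chainX (hSe : S.Exact) (hlast : IsZero (S.obj' (n+3) (by omega)))
    {X : ModuleCat.{u} A} (e : ℕ) (he1 : 1 ≤ e)
    (hTk : ∀ (k : ℕ) (hk : k ≤ n) (j : ℕ) (hj : e ≤ j),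
      Subsingleton (Ext (S.obj' (k+2) (by omega)) X j))
    (k : ℕ) (hke : e ≤ k) (hkn : k ≤ n) : Subsingleton (Ext (Kk S k (by omega)) X k) :=
  chainX_aux S hSe hlast e hTk (n - k) k (by omega) he1 hke hkn

/-- Upward chain: composition with `ξ_k` is injective on `Ext^0(C_0, M)` for `k ≤ e`. -/
lemma chainM (hSe : S.Exact) {M : ModuleCat.{u} A} (e : ℕ) (hen : e ≤ n)
    (hMk : ∀ (k : ℕ) (hk : k ≤ n) (j : ℕ) (hj : j ≠ e),
      Subsingleton (Ext (S.obj' (k+2) (by omega)) M j)) :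
    ∀ (k : ℕ) (hk3 : k + 3 ≤ n + 3) (hke : k ≤ e),
      ∀ v : Ext (Kk S 0 (by omega)) M 0,
        (xi S hSe k hk3).comp v (show k + 0 = k by omega) = 0 → v = 0 := by
  intro k
  induction k with
  | zero =>
      intro hk3 hke v hv
      exact (Ext.mk₀_id_comp v).symm.trans hv
  | succ k ih =>
      intro hk3 hke v hv
      have h4 : k + 4 ≤ n + 3 := by omega
      have hv' : ((Ek_shortExact S hSe k h4).extClass.comp (xi S hSe k (by omega))
          (show 1 + k = k + 1 by omega)).comp v (show (k+1) + 0 = k + 1 by omega) = 0 := hv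
      replace hv' := (Ext.comp_assoc _ _ _ (show 1 + k = k + 1 by omega) (show k + 0 = k by omega)
        (show 1 + k + 0 = k + 1 by omega)).symm.trans hv'
      exact ih (by omega) (by omega) v
        (eq_zero_of_extClass_comp_eq_zero (Ek_shortExact S hSe k h4)
          (hMk k (by omega) k (by omega)) _ hv')

end Coresolution

end Stmt10Aux

/-- Let `T` be classical `n`-tilting, `1 ≤ e ≤ n` and
`M ∈ KE_e(T)`. If `Ext_A^i(T,X) = 0` for every `i ≥ e`, then
`Hom_A(X,M) = 0`; the same holds for every quotient of such a module and for
every extension of such quotients. -/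
theorem stmt10 (n : ℕ) (hT : IsClassicalTilting A T n) (e : ℕ)
    (he1 : 1 ≤ e) (he2 : e ≤ n) (M : ModuleCat.{u} A) (hM : memKE A T e M) :
    (∀ X : ModuleCat.{u} A, ExtVanishFrom A T e X → ∀ f : X ⟶ M, f = 0) ∧
    (∀ X' : ModuleCat.{u} A, QuotOfExtVanishFrom A T e X' →
      ∀ f : X' ⟶ M, f = 0) ∧
    (∀ S : ShortComplex (ModuleCat.{u} A), S.ShortExact →
      QuotOfExtVanishFrom A T e S.X₁ → QuotOfExtVanishFrom A T e S.X₃ →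
      ∀ f : S.X₂ ⟶ M, f = 0) := by
  obtain ⟨S, hSe, h0, hlast, hA1, hcor⟩ := hT.cores
  haveI hiso := Stmt10Aux.czero_isIso S hSe h0
  -- Part 1 : for `X` with `Ext^{≥e}(T,X)=0`, every `f : X ⟶ M` is zero
  have part1 : ∀ X : ModuleCat.{u} A, ExtVanishFrom A T e X → ∀ f : X ⟶ M, f = 0 := by
    intro X hX f
    have hTkX : ∀ (k : ℕ) (hk : k ≤ n) (j : ℕ) (hj : e ≤ j),
        Subsingleton (Abelian.Ext (S.obj' (k+2) (by omega)) X j) := by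
      intro k hk j hj
      exact Stmt10Aux.subsingleton_ext_summand' T (hcor k hk).1 (hcor k hk).2 (hX j hj)
    have hMk : ∀ (k : ℕ) (hk : k ≤ n) (j : ℕ) (hj : j ≠ e),
        Subsingleton (Abelian.Ext (S.obj' (k+2) (by omega)) M j) := by
      intro k hk j hj
      exact Stmt10Aux.subsingleton_ext_summand' T (hcor k hk).1 (hcor k hk).2 (hM j hj)
    have hsubX := Stmt10Aux.chainX S hSe hlast e he1 hTkX e le_rfl he2
    have he3 : e + 3 ≤ n + 3 := by omega
    have h03 : 0 + 3 ≤ n + 3 := by omega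
    -- every map from `C_0` to `X` composed with `f` vanishes
    have hx0 : ∀ x : Stmt10Aux.Kk S 0 h03 ⟶ X, x ≫ f = 0 := by
      intro x
      have hw0 : (Stmt10Aux.xi S hSe e he3).comp (Abelian.Ext.mk₀ x)
          (show e + 0 = e by omega) = 0 := @Subsingleton.elim _ hsubX _ 0
      have hv : (Stmt10Aux.xi S hSe e he3).comp (Abelian.Ext.mk₀ (x ≫ f))
          (show e + 0 = e by omega) = 0 := by
        calc (Stmt10Aux.xi S hSe e he3).comp (Abelian.Ext.mk₀ (x ≫ f))
              (show e + 0 = e by omega)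
            = (Stmt10Aux.xi S hSe e he3).comp
                ((Abelian.Ext.mk₀ x).comp (Abelian.Ext.mk₀ f) (zero_add 0))
                (show e + 0 = e by omega) := by rw [Abelian.Ext.mk₀_comp_mk₀]
          _ = ((Stmt10Aux.xi S hSe e he3).comp (Abelian.Ext.mk₀ x)
                (show e + 0 = e by omega)).comp (Abelian.Ext.mk₀ f)
                (show e + 0 = e by omega) :=
              (Abelian.Ext.comp_assoc _ _ _ (show e + 0 = e by omega) (zero_add 0)
                (show e + 0 + 0 = e by omega)).symm
          _ = (0 : Abelian.Ext (Stmt10Aux.Kk S e he3) X e).comp (Abelian.Ext.mk₀ f)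
                (show e + 0 = e by omega) := by rw [hw0]
          _ = 0 := Abelian.Ext.zero_comp _ e (Abelian.Ext.mk₀ f) e (show e + 0 = e by omega)
      have hz := Stmt10Aux.chainM S hSe e he2 hMk e he3 le_rfl
        (Abelian.Ext.mk₀ (x ≫ f)) hv
      rw [← Abelian.Ext.mk₀_zero] at hz
      exact Stmt10Aux.mk₀_inj hz
    -- conclude elementwise
    refine ModuleCat.hom_ext (LinearMap.ext fun mval => ?_)
    let q : ModuleCat.of A A ⟶ X := ModuleCat.ofHom (LinearMap.toSpanSingleton A X mval)
    let x : Stmt10Aux.Kk S 0 (by omega) ⟶ X :=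
      inv (Stmt10Aux.czero S hSe.toIsComplex) ≫ eqToHom hA1 ≫ q
    have hxf := hx0 x
    let y : (S.obj' 1 (by omega) : ModuleCat.{u} A) := (eqToHom hA1.symm) (1 : A)
    have h5 : inv (Stmt10Aux.czero S hSe.toIsComplex)
        ((Stmt10Aux.czero S hSe.toIsComplex) y) = y := by
      have h6 := IsIso.hom_inv_id (Stmt10Aux.czero S hSe.toIsComplex)
      exact congrArg (fun φ : S.obj' 1 (by omega) ⟶ S.obj' 1 (by omega) => φ y) h6
    have h7 : (eqToHom hA1 : S.obj' 1 (by omega) ⟶ ModuleCat.of A A) y = (1 : A) := by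
      have h8 : (eqToHom hA1.symm ≫ eqToHom hA1 :
          ModuleCat.of A A ⟶ ModuleCat.of A A) = 𝟙 _ := by
        rw [eqToHom_trans, eqToHom_refl]
      exact congrArg (fun φ : ModuleCat.of A A ⟶ ModuleCat.of A A => φ (1 : A)) h8
    have h9 : x ((Stmt10Aux.czero S hSe.toIsComplex) y) = mval := by
      show q ((eqToHom hA1) (inv (Stmt10Aux.czero S hSe.toIsComplex)
        ((Stmt10Aux.czero S hSe.toIsComplex) y))) = mval
      rw [h5, h7]
      show (1 : A) • mval = mval
      rw [one_smul]
    have h10 := congrArg (fun φ : Stmt10Aux.Kk S 0 (by omega) ⟶ M =>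
      φ ((Stmt10Aux.czero S hSe.toIsComplex) y)) hxf
    simp only at h10
    show f mval = 0
    rw [← h9]
    exact h10
  -- Part 2 : quotients
  have part2 : ∀ X' : ModuleCat.{u} A, QuotOfExtVanishFrom A T e X' → ∀ f : X' ⟶ M, f = 0 := by
    intro X' ⟨X, π, hπ, hX⟩ f
    have h1 : π ≫ f = 0 := part1 X hX (π ≫ f)
    rw [← cancel_epi π, h1, comp_zero]
  refine ⟨part1, part2, ?_⟩
  -- Part 3 : extensions of quotients
  intro SC hSC h1 h3 f
  have hf1 : SC.f ≫ f = 0 := part2 SC.X₁ h1 (SC.f ≫ f)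
  haveI := hSC.epi_g
  obtain ⟨φ, hφ⟩ := CokernelCofork.IsColimit.desc' hSC.exact.gIsCokernel f hf1
  rw [← hφ, part2 SC.X₃ h3 φ, comp_zero]
end

section
/- Let R = (R^{≤0}, R^{≥0}) and S = (S^{≤0}, S^{≥0}) be two t-structures on the derived category D(A) of left A-modules over an associative unital ring A, such that R^{≤-1} ⊆ S^{≤0} ⊆ R^{≤0} (equivalently, R^{≥0} ⊆ S^{≥0} ⊆ R^{≥-1}). Set X = H_R ∩ S^{≤0} and Y = H_R ∩ S^{≥1}, where H_R = R^{≤0} ∩ R^{≥0} is the heart of R. Then (X, Y) is a torsion pair in the abelian category H_R, one has X = R^{≥0} ∩ S^{≤0} and Y = R^{≤0} ∩ S^{≥1}, and S is the tilt of R with respect to (X, Y): S^{≤0} = {X' ∈ R^{≤0} : H_R^0(X') ∈ X} and S^{≥0} = {X' ∈ R^{≥-1} : H_R^{-1}(X') ∈ Y}, where H_R^i denotes the i-th cohomology functor with respect to R. -/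
set_option maxHeartbeats 1000000
set_option synthInstance.maxHeartbeats 400000
open CategoryTheory Limits Triangulated Pretriangulated
universe u
variable (A : Type u) [Ring A]
/-- The derived category `D(A)` of `A`-Mod. -/
abbrev DA := DerivedCategory (ModuleCat.{u} A)

/-- Membership in the heart of a t-structure. -/
def inHeart (t : TStructure (DA A)) (X : DA A) : Prop := t.le 0 X ∧ t.ge 0 X

section Aux

variable {C : Type*} [Category C] [Preadditive C] [HasZeroObject C] [HasShift C ℤ]
  [∀ (n : ℤ), (shiftFunctor C n).Additive] [Pretriangulated C]
variable (t : TStructure C)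

/-- Orthogonality `Hom(LE n, GE (n+1)) = 0`, in general degree. -/
lemma TS.zero {X Y : C} {n : ℤ} (hX : t.le n X) (hY : t.ge (n + 1) Y) (f : X ⟶ Y) : f = 0 := by
  have hX' : t.le 0 (X⟦n⟧) := t.le_shift n n 0 (by omega) X hX
  have hY' : t.ge 1 (Y⟦n⟧) := t.ge_shift (n + 1) n 1 (by omega) Y hY
  have h := t.zero' ((shiftFunctor C n).map f) hX' hY'
  apply (shiftFunctor C n).map_injective
  rw [h, Functor.map_zero]

lemma TS.zero' {X Y : C} {a b : ℤ} (hab : a < b) (hX : t.le a X) (hY : t.ge b Y)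
    (f : X ⟶ Y) : f = 0 :=
  TS.zero t hX (t.ge_antitone (show a + 1 ≤ b by omega) Y hY) f

lemma TS.le_shift_iff (n a : ℤ) (X : C) : t.le n (X⟦a⟧) ↔ t.le (a + n) X := by
  rw [← t.shift_le a n (a + n) rfl]; rfl

lemma TS.ge_shift_iff (n a : ℤ) (X : C) : t.ge n (X⟦a⟧) ↔ t.ge (a + n) X := by
  rw [← t.shift_ge a n (a + n) rfl]; rfl

/-- If `X` is left-orthogonal to `GE (n+1)`, then `X ∈ LE n`. -/
lemma TS.le_of_orthogonal (n : ℤ) (X : C)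
    (h : ∀ (W : C), t.ge (n + 1) W → ∀ f : X ⟶ W, f = 0) : t.le n X := by
  obtain ⟨A, B, hA, hB, f, g, hcon, mem⟩ := t.exists_triangle X n (n + 1) rfl
  have hg : g = 0 := h B hB g
  obtain ⟨r, hr⟩ := Pretriangulated.Triangle.yoneda_exact₂ _
    (rot_of_distTriang _ mem) (𝟙 B) ((Category.comp_id g).trans hg)
  have hr0 : r = 0 := TS.zero' t (show n - 1 < n + 1 by omega)
    (t.le_shift n 1 (n - 1) (by omega) A hA) hB r
  have hBzero : IsZero B := by
    rw [IsZero.iff_id_eq_zero, hr, hr0]; exact comp_zero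
  have : IsIso f := (Pretriangulated.Triangle.isZero₃_iff_isIso₁ _ mem).1 hBzero
  exact (t.le n).prop_of_iso (asIso f) hA

/-- If `X` is right-orthogonal to `LE (n-1)`, then `X ∈ GE n`. -/
lemma TS.ge_of_orthogonal (n : ℤ) (X : C)
    (h : ∀ (W : C), t.le (n - 1) W → ∀ f : W ⟶ X, f = 0) : t.ge n X := by
  obtain ⟨A, B, hA, hB, f, g, hcon, mem⟩ := t.exists_triangle X (n - 1) n (by omega)
  have hf : f = 0 := h A hA f
  obtain ⟨r, hr⟩ := Pretriangulated.Triangle.coyoneda_exact₂ _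
    (inv_rot_of_distTriang _ mem) (𝟙 A) ((Category.id_comp f).trans hf)
  have hr0 : r = 0 := TS.zero' t (show n - 1 < n + 1 by omega) hA
    (t.ge_shift n (-1) (n + 1) (by omega) B hB) r
  have hAzero : IsZero A := by
    rw [IsZero.iff_id_eq_zero, hr, hr0]; exact zero_comp
  have : IsIso g := (Pretriangulated.Triangle.isZero₁_iff_isIso₂ _ mem).1 hAzero
  exact (t.ge n).prop_of_iso (asIso g).symm hB

/-- `LE n` is closed under extensions. -/
lemma TS.le_ext (n : ℤ) (T : Pretriangulated.Triangle C) (hT : T ∈ distTriang C)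
    (h₁ : t.le n T.obj₁) (h₃ : t.le n T.obj₃) : t.le n T.obj₂ := by
  apply TS.le_of_orthogonal t n
  intro W hW f
  obtain ⟨g, hg⟩ := Pretriangulated.Triangle.yoneda_exact₂ _ hT f (TS.zero t h₁ hW _)
  rw [hg, TS.zero t h₃ hW g, comp_zero]

/-- `GE n` is closed under extensions. -/
lemma TS.ge_ext (n : ℤ) (T : Pretriangulated.Triangle C) (hT : T ∈ distTriang C)
    (h₁ : t.ge n T.obj₁) (h₃ : t.ge n T.obj₃) : t.ge n T.obj₂ := by
  apply TS.ge_of_orthogonal t n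
  intro W hW f
  obtain ⟨g, hg⟩ := Pretriangulated.Triangle.coyoneda_exact₂ _ hT f
    (TS.zero' t (show n - 1 < n by omega) hW h₃ _)
  rw [hg, TS.zero' t (show n - 1 < n by omega) hW h₁ g, zero_comp]

end Aux

/-- (Polishchuk / Happel–Reiten–Smalø) If `R`, `S` are
t-structures on `D(A)` with `R^{≤-1} ⊆ S^{≤0} ⊆ R^{≤0}`, then
`𝒳 = H_R ∩ S^{≤0}` and `𝒴 = H_R ∩ S^{≥1}` form a torsion pair in the heart
`H_R` (short exact sequences in the heart being encoded by distinguished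
triangles), `𝒳 = R^{≥0} ∩ S^{≤0}`, `𝒴 = R^{≤0} ∩ S^{≥1}`, and `S` is the tilt
of `R` with respect to `(𝒳, 𝒴)` (the conditions `H_R^0(Z) ∈ 𝒳`, resp.
`H_R^{-1}(Z) ∈ 𝒴`, being encoded by the truncation triangles of `R`). -/
theorem stmt17 (R S : TStructure (DA A))
    (hRS₁ : ∀ X : DA A, R.le (-1) X → S.le 0 X)
    (hRS₂ : ∀ X : DA A, S.le 0 X → R.le 0 X) :
    -- `(𝒳, 𝒴)` is a torsion pair in `H_R`: Hom-vanishing ...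
    (∀ X Y : DA A, inHeart A R X → S.le 0 X → inHeart A R Y → S.ge 1 Y →
      ∀ f : X ⟶ Y, f = 0) ∧
    -- ... and every object of `H_R` is an extension of an object of `𝒴`
    -- by an object of `𝒳`
    (∀ M : DA A, inHeart A R M →
      ∃ (X Y : DA A) (f : X ⟶ M) (g : M ⟶ Y) (h : Y ⟶ X⟦(1:ℤ)⟧),
        inHeart A R X ∧ S.le 0 X ∧ inHeart A R Y ∧ S.ge 1 Y ∧
        Triangle.mk f g h ∈ distTriang (DA A)) ∧
    -- `𝒳 = R^{≥0} ∩ S^{≤0}`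
    (∀ X : DA A, (inHeart A R X ∧ S.le 0 X) ↔ (R.ge 0 X ∧ S.le 0 X)) ∧
    -- `𝒴 = R^{≤0} ∩ S^{≥1}`
    (∀ Y : DA A, (inHeart A R Y ∧ S.ge 1 Y) ↔ (R.le 0 Y ∧ S.ge 1 Y)) ∧
    -- `S^{≤0} = {Z ∈ R^{≤0} : H_R^0(Z) ∈ 𝒳}`
    (∀ Z : DA A, S.le 0 Z ↔ (R.le 0 Z ∧
      ∃ (W H : DA A) (f : W ⟶ Z) (g : Z ⟶ H) (h : H ⟶ W⟦(1:ℤ)⟧),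
        R.le (-1) W ∧ inHeart A R H ∧ S.le 0 H ∧
        Triangle.mk f g h ∈ distTriang (DA A))) ∧
    -- `S^{≥0} = {Z ∈ R^{≥-1} : H_R^{-1}(Z) ∈ 𝒴}`
    (∀ Z : DA A, S.ge 0 Z ↔ (R.ge (-1) Z ∧
      ∃ (W B : DA A) (f : W ⟶ Z) (g : Z ⟶ B) (h : B ⟶ W⟦(1:ℤ)⟧),
        R.ge 0 B ∧ inHeart A R (W⟦(-1:ℤ)⟧) ∧ S.ge 1 (W⟦(-1:ℤ)⟧) ∧
        Triangle.mk f g h ∈ distTriang (DA A))) := by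
  -- derived containments
  have h21 : ∀ X : DA A, S.ge 1 X → R.ge 0 X := fun X hX =>
    TS.ge_of_orthogonal R 0 X (fun W hW f => S.zero' f (hRS₁ W (by simpa using hW)) hX)
  have hR1S1 : ∀ X : DA A, R.ge 1 X → S.ge 1 X := fun X hX =>
    TS.ge_of_orthogonal S 1 X (fun W hW f => R.zero' f (hRS₂ W (by simpa using hW)) hX)
  have hR0S0 : ∀ X : DA A, R.ge 0 X → S.ge 0 X := by
    intro X hX
    have h1 : R.ge 1 (X⟦(-1:ℤ)⟧) := R.ge_shift 0 (-1) 1 (by omega) X hX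
    have h2 : S.ge 1 (X⟦(-1:ℤ)⟧) := hR1S1 _ h1
    have := (TS.ge_shift_iff S 1 (-1) X).1 h2
    simpa using this
  have hS0Rm1 : ∀ X : DA A, S.ge 0 X → R.ge (-1) X := by
    intro X hX
    have h1 : S.ge 1 (X⟦(-1:ℤ)⟧) := S.ge_shift 0 (-1) 1 (by omega) X hX
    have h2 : R.ge 0 (X⟦(-1:ℤ)⟧) := h21 _ h1
    have := (TS.ge_shift_iff R 0 (-1) X).1 h2
    simpa using this
  refine ⟨?_, ?_, ?_, ?_, ?_, ?_⟩
  · -- Hom vanishing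
    intro X Y _ hX _ hY f
    exact S.zero' f hX hY
  · -- torsion pair decomposition
    rintro M ⟨hML, hMG⟩
    obtain ⟨X, Y, hX0, hY1, f, g, hcon, mem⟩ := S.exists_triangle M 0 1 rfl
    have hXL : R.le 0 X := hRS₂ X hX0
    have hYG : R.ge 0 Y := h21 Y hY1
    have hXG : R.ge 0 X := by
      refine TS.ge_ext R 0 _ (inv_rot_of_distTriang _ mem) ?_ ?_
      · exact R.ge_antitone (by omega) _ (R.ge_shift 0 (-1) 1 (by omega) Y hYG)
      · exact hMG
    have hYL : R.le 0 Y := by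
      refine TS.le_ext R 0 _ (rot_of_distTriang _ mem) hML ?_
      · exact R.le_monotone (show (-1:ℤ) ≤ 0 by omega) _ (R.le_shift 0 1 (-1) (by omega) X hXL)
    exact ⟨X, Y, f, g, hcon, ⟨hXL, hXG⟩, hX0, ⟨hYL, hYG⟩, hY1, mem⟩
  · -- 𝒳 = R^{≥0} ∩ S^{≤0}
    intro X
    exact ⟨fun ⟨⟨_, h⟩, hs⟩ => ⟨h, hs⟩, fun ⟨hg, hs⟩ => ⟨⟨hRS₂ X hs, hg⟩, hs⟩⟩
  · -- 𝒴 = R^{≤0} ∩ S^{≥1}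
    intro Y
    exact ⟨fun ⟨⟨h, _⟩, hs⟩ => ⟨h, hs⟩, fun ⟨hl, hs⟩ => ⟨⟨hl, h21 Y hs⟩, hs⟩⟩
  · -- description of S^{≤0}
    intro Z
    constructor
    · intro hZ
      obtain ⟨W, H, hW, hH, f, g, hcon, mem⟩ := R.exists_triangle Z (-1) 0 (by omega)
      have hW1 : R.le (-2) (W⟦(1:ℤ)⟧) := R.le_shift (-1) 1 (-2) (by omega) W hW
      have hHle : R.le 0 H := by
        refine TS.le_ext R 0 _ (rot_of_distTriang _ mem) (hRS₂ Z hZ) ?_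
        exact R.le_monotone (show (-2:ℤ) ≤ 0 by omega) _ hW1
      have hHS : S.le 0 H := by
        refine TS.le_ext S 0 _ (rot_of_distTriang _ mem) hZ ?_
        exact hRS₁ _ (R.le_monotone (show (-2:ℤ) ≤ -1 by omega) _ hW1)
      exact ⟨hRS₂ Z hZ, W, H, f, g, hcon, hW, ⟨hHle, hH⟩, hHS, mem⟩
    · rintro ⟨_, W, H, f, g, hcon, hW, _, hHS, mem⟩
      exact TS.le_ext S 0 _ mem (hRS₁ W hW) hHS
  · -- description of S^{≥0}
    intro Z
    constructor
    · intro hZ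
      obtain ⟨W, B, hW, hB, f, g, hcon, mem⟩ := R.exists_triangle Z (-1) 0 (by omega)
      have hBm1 : R.ge 1 (B⟦(-1:ℤ)⟧) := R.ge_shift 0 (-1) 1 (by omega) B hB
      have hWRge : R.ge (-1) W := by
        refine TS.ge_ext R (-1) _ (inv_rot_of_distTriang _ mem) ?_ (hS0Rm1 Z hZ)
        exact R.ge_antitone (by omega) _ hBm1
      have hWSge : S.ge 0 W := by
        refine TS.ge_ext S 0 _ (inv_rot_of_distTriang _ mem) ?_ hZ
        exact S.ge_one_le _ (hR1S1 _ hBm1)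
      have hWshift : inHeart A R (W⟦(-1:ℤ)⟧) := by
        constructor
        · rw [TS.le_shift_iff R 0 (-1) W]
          simpa using hW
        · rw [TS.ge_shift_iff R 0 (-1) W]
          simpa using hWRge
      have hWS1 : S.ge 1 (W⟦(-1:ℤ)⟧) := by
        rw [TS.ge_shift_iff S 1 (-1) W]
        simpa using hWSge
      exact ⟨hS0Rm1 Z hZ, W, B, f, g, hcon, hB, hWshift, hWS1, mem⟩
    · rintro ⟨_, W, B, f, g, hcon, hB, _, hWS1, mem⟩
      have hWSge : S.ge 0 W := by
        have := (TS.ge_shift_iff S 1 (-1) W).1 hWS1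
        simpa using this
      exact TS.ge_ext S 0 _ mem hWSge (hR0S0 B hB)
end
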